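/- Let C be a copula with continuous partial derivative ∂₂C in v. If ∂₂C(u,v) ≥ ∂₂C(u,1-v) for all u ∈ (0,1) and v ∈ (0,1/2) (the sPQD property), then C(u,v) + C(u,1-v) ≥ u for all u,v ∈ [0,1] (the wPQD property). -/

import Mathlib

open MeasureTheory Set

/-- A (bivariate) copula: grounded, with uniform marginals, and 2-increasing. -/
structure IsCopula (C : ℝ → ℝ → ℝ) : Prop where
  grounded_fst : ∀ v ∈ Icc (0:ℝ) 1, C 0 v = 0
  grounded_snd : ∀ u ∈ Icc (0:ℝ) 1, C u 0 = 0
  margin_fst : ∀ u ∈ Icc (0:ℝ) 1, C u 1 = u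
  margin_snd : ∀ v ∈ Icc (0:ℝ) 1, C 1 v = v
  twoIncreasing : ∀ u₁ u₂ v₁ v₂ : ℝ, u₁ ∈ Icc (0:ℝ) 1 → u₂ ∈ Icc (0:ℝ) 1 →
    v₁ ∈ Icc (0:ℝ) 1 → v₂ ∈ Icc (0:ℝ) 1 → u₁ ≤ u₂ → v₁ ≤ v₂ →
    C u₁ v₂ + C u₂ v₁ ≤ C u₁ v₁ + C u₂ v₂

/-- If the partial derivative `∂₂C` of a copula `C` (continuous in `v`) satisfies
`∂₂C(u,v) ≥ ∂₂C(u,1-v)` for `u ∈ (0,1)`, `v ∈ (0,1/2)` (sPQD), then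
`C(u,v) + C(u,1-v) ≥ u` on `[0,1]²` (wPQD). -/
theorem stmt5 (C : ℝ → ℝ → ℝ) (hC : IsCopula C)
    (D : ℝ → ℝ → ℝ)
    (hcont : ∀ u ∈ Icc (0:ℝ) 1, ContinuousOn (C u) (Icc (0:ℝ) 1))
    (hderiv : ∀ u ∈ Ioo (0:ℝ) 1, ∀ v ∈ Ioo (0:ℝ) 1, HasDerivAt (C u) (D u v) v)
    (hDcont : ∀ u ∈ Ioo (0:ℝ) 1, ContinuousOn (D u) (Ioo (0:ℝ) 1))
    (hsPQD : ∀ u ∈ Ioo (0:ℝ) 1, ∀ v ∈ Ioo (0:ℝ) (1/2), D u (1 - v) ≤ D u v) :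
    ∀ u ∈ Icc (0:ℝ) 1, ∀ v ∈ Icc (0:ℝ) 1, u ≤ C u v + C u (1 - v) := by
  intro u hu v hv
  have h1v : (1 - v) ∈ Icc (0:ℝ) 1 := ⟨by linarith [hv.2], by linarith [hv.1]⟩
  -- boundary cases for u
  rcases eq_or_lt_of_le hu.1 with h0 | h0
  · rw [← h0, hC.grounded_fst v hv, hC.grounded_fst _ h1v]; norm_num
  rcases eq_or_lt_of_le hu.2 with h1 | h1
  · rw [h1, hC.margin_snd v hv, hC.margin_snd _ h1v]; linarith
  have huo : u ∈ Ioo (0:ℝ) 1 := ⟨h0, h1⟩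
  set f : ℝ → ℝ := fun w => C u w + C u (1 - w) with hf
  -- f 0 = u
  have hf0 : f 0 = u := by
    simp only [hf, sub_zero]
    rw [hC.grounded_snd u hu, hC.margin_fst u hu, zero_add]
  -- f is symmetric
  have hsym : ∀ w, f (1 - w) = f w := by
    intro w; simp only [hf, sub_sub_cancel]; ring
  -- f is continuous on [0,1]
  have hfc : ContinuousOn f (Icc (0:ℝ) 1) := by
    apply ContinuousOn.add (hcont u hu)
    exact (hcont u hu).comp (continuous_const.sub continuous_id).continuousOn
      (fun x hx => ⟨by simp [hx.2], by simp [hx.1]⟩)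
  -- derivative on (0, 1/2)
  have hfd : ∀ x ∈ Ioo (0:ℝ) (1/2), HasDerivAt f (D u x - D u (1 - x)) x := by
    intro x hx
    have hx1 : x ∈ Ioo (0:ℝ) 1 := ⟨hx.1, by linarith [hx.2]⟩
    have h1x : (1 - x) ∈ Ioo (0:ℝ) 1 := ⟨by linarith [hx.2], by linarith [hx.1]⟩
    have inner : HasDerivAt (fun y : ℝ => 1 - y) (-1) x := by
      simpa using (hasDerivAt_id x).const_sub 1
    have h2 : HasDerivAt (fun w => C u (1 - w)) (D u (1 - x) * (-1)) x :=
      (hderiv u huo (1 - x) h1x).comp x inner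
    have := (hderiv u huo x hx1).add h2
    exact this.congr_deriv (by ring)
  -- f is monotone on [0, 1/2]
  have hmono : MonotoneOn f (Icc (0:ℝ) (1/2)) := by
    apply monotoneOn_of_deriv_nonneg (convex_Icc 0 (1/2))
      (hfc.mono (Icc_subset_Icc le_rfl (by norm_num)))
    · intro x hx
      rw [interior_Icc] at hx
      exact (hfd x hx).differentiableAt.differentiableWithinAt
    · intro x hx
      rw [interior_Icc] at hx
      rw [(hfd x hx).deriv]
      have := hsPQD u huo x hx
      linarith
  -- conclude
  rcases le_or_gt v (1/2) with hv2 | hv2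
  · have := hmono (left_mem_Icc.mpr (by norm_num)) ⟨hv.1, hv2⟩ hv.1
    rw [hf0] at this; exact this
  · have h1v2 : (1 - v) ∈ Icc (0:ℝ) (1/2) := ⟨by linarith [hv.2], by linarith⟩
    have := hmono (left_mem_Icc.mpr (by norm_num)) h1v2 h1v2.1
    rw [hf0, hsym] at this; exact this
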